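/- (Lin's multiclass bounds) For a k-class problem, (1/(4(k−1)))·J_k² ≤ p(error_k) ≤ (1/2)·J_k, where J_k = H(π) − JS_π(p1,…,p_k). -/

import Mathlib

open Finset

set_option maxHeartbeats 1000000
set_option autoImplicit false

noncomputable def entropy2 {X : Type*} [Fintype X] (P : X → ℝ) : ℝ :=
  -∑ x, P x * Real.logb 2 (P x)

private lemma log2_pos : (0:ℝ) < Real.log 2 := Real.log_pos (by norm_num)



/-- For `x ≥ 1`, `2 log x ≤ x - x⁻¹`. -/
private lemma sl1 {x : ℝ} (hx : 1 ≤ x) : 2 * Real.log x ≤ x - x⁻¹ := by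
  set g : ℝ → ℝ := fun y => y - y⁻¹ - 2 * Real.log y with hg
  have hd : ∀ y : ℝ, 0 < y → HasDerivAt g (1 - -(y^2)⁻¹ - 2 * y⁻¹) y := by
    intro y hy
    exact ((hasDerivAt_id y).sub (hasDerivAt_inv hy.ne')).sub
      ((Real.hasDerivAt_log hy.ne').const_mul 2)
  have hmono : MonotoneOn g (Set.Ici 1) := by
    apply monotoneOn_of_deriv_nonneg (convex_Ici 1)
    · intro y hy
      have hy0 : 0 < y := lt_of_lt_of_le one_pos hy
      exact ((hd y hy0).continuousAt).continuousWithinAt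
    · intro y hy
      rw [interior_Ici] at hy
      exact ((hd y (lt_trans one_pos hy)).differentiableAt).differentiableWithinAt
    · intro y hy
      rw [interior_Ici] at hy
      have hy0 : (0:ℝ) < y := lt_trans one_pos hy
      rw [(hd y hy0).deriv]
      have h1 : (y^2)⁻¹ = (y⁻¹)^2 := by rw [← inv_pow]
      nlinarith [sq_nonneg (1 - y⁻¹)]
  have h0 : g 1 ≤ g x := hmono (by norm_num) hx hx
  simp [hg] at h0
  linarith

/-- For `x ≥ 1`, `2(x-1)/(x+1) ≤ log x`. -/
private lemma sl2 {x : ℝ} (hx : 1 ≤ x) : 2*(x-1)/(x+1) ≤ Real.log x := by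
  set g : ℝ → ℝ := fun y => Real.log y - 2*(y-1)/(y+1) with hg
  have hd : ∀ y : ℝ, 0 < y → HasDerivAt g (y⁻¹ - 4 * ((y+1)^2)⁻¹) y := by
    intro y hy
    have h1 : HasDerivAt (fun y : ℝ => 2*(y-1)/(y+1)) (4 * ((y+1)^2)⁻¹) y := by
      have hne : y + 1 ≠ 0 := by positivity
      have := (((hasDerivAt_id y).sub_const 1).const_mul 2).div
        ((hasDerivAt_id y).add_const 1) hne
      refine this.congr_deriv ?_
      simp only [id]
      ring
    exact (Real.hasDerivAt_log hy.ne').sub h1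
  have hmono : MonotoneOn g (Set.Ici 1) := by
    apply monotoneOn_of_deriv_nonneg (convex_Ici 1)
    · intro y hy
      have hy0 : 0 < y := lt_of_lt_of_le one_pos hy
      exact ((hd y hy0).continuousAt).continuousWithinAt
    · intro y hy
      rw [interior_Ici] at hy
      exact ((hd y (lt_trans one_pos hy)).differentiableAt).differentiableWithinAt
    · intro y hy
      rw [interior_Ici] at hy
      have hy0 : (0:ℝ) < y := lt_trans one_pos hy
      rw [(hd y hy0).deriv]
      have h2 : (0:ℝ) < (y+1)^2 := by positivity
      rw [sub_nonneg, ← div_eq_mul_inv, div_le_iff₀ h2, inv_mul_eq_div, le_div_iff₀ hy0]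
      nlinarith [sq_nonneg (y-1)]
  have h0 : g 1 ≤ g x := hmono (by norm_num) hx hx
  simp [hg] at h0
  linarith


private lemma log2_lt : Real.log 2 < 0.6931471808 := Real.log_two_lt_d9
private lemma log2_gt : (0.6931471803:ℝ) < Real.log 2 := Real.log_two_gt_d9

/-- `-log t ≥ 2 log 2 (1-t)` for `0 < t ≤ 1/2`. -/
private lemma l3 {t : ℝ} (h0 : 0 < t) (h2 : t ≤ 1/2) :
    2*Real.log 2*(1-t) ≤ -Real.log t := by
  have hA : Real.log (2*t) ≤ 2*t - 1 := Real.log_le_sub_one_of_pos (by linarith)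
  rw [Real.log_mul (by norm_num) h0.ne'] at hA
  nlinarith [log2_lt, mul_nonneg (by linarith : (0:ℝ) ≤ 1-2*t)
    (by nlinarith [log2_lt] : (0:ℝ) ≤ 1 - Real.log 2)]

/-- binary entropy lower bound `H(t) ≥ 2 log 2 · t` for `t ∈ [0,1/2]`. -/
private lemma l2 {t : ℝ} (h0 : 0 ≤ t) (h2 : t ≤ 1/2) :
    2*Real.log 2*t ≤ -(t*Real.log t) - (1-t)*Real.log (1-t) := by
  rcases h0.eq_or_lt with h|ht0
  · simp [← h]
  have hA : Real.log (2*t) ≤ 2*t - 1 := Real.log_le_sub_one_of_pos (by linarith)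
  rw [Real.log_mul (by norm_num) ht0.ne'] at hA
  have hA' := mul_le_mul_of_nonneg_left hA h0
  rcases le_or_gt t (2/5) with h45|h45
  · have hB : Real.log (1-t) ≤ -t := by
      have := Real.log_le_sub_one_of_pos (show (0:ℝ) < 1-t by linarith)
      linarith
    have hB' := mul_le_mul_of_nonneg_left hB (show (0:ℝ) ≤ 1-t by linarith)
    nlinarith [mul_nonneg h0 (show (0:ℝ) ≤ 2 - 3*t - Real.log 2 by nlinarith [log2_lt])]
  · have hB : Real.log 2 + Real.log (1-t) ≤ 1 - 2*t := by
      have := Real.log_le_sub_one_of_pos (show (0:ℝ) < 2*(1-t) by linarith)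
      rw [Real.log_mul (by norm_num) (by linarith : (1:ℝ)-t ≠ 0)] at this
      linarith
    have hB' := mul_le_mul_of_nonneg_left hB (show (0:ℝ) ≤ 1-t by linarith)
    nlinarith [mul_nonneg (show (0:ℝ) ≤ 1-2*t by linarith)
      (show (0:ℝ) ≤ Real.log 2 - (1-2*t) by nlinarith [log2_gt])]






private lemma binEnt_half {t : ℝ} (h0 : 0 ≤ t) (h2 : t ≤ 1/2) :
    -(t*Real.log t) - (1-t)*Real.log (1-t) ≤ 2*Real.log 2*Real.sqrt (t*(1-t)) := by
  rcases h0.eq_or_lt with h|ht0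
  · simp [← h]
  have h1t : (0:ℝ) < 1 - t := by linarith
  have hw0 : (0:ℝ) ≤ Real.sqrt (t*(1-t)) := Real.sqrt_nonneg _
  rcases le_or_gt t (1/8) with hA|hB
  · -- region A
    set r := Real.sqrt t with hr
    set c := Real.sqrt (1-t) with hc
    have hr2 : r^2 = t := Real.sq_sqrt h0
    have hc2 : c^2 = 1-t := Real.sq_sqrt h1t.le
    have hr0 : 0 < r := Real.sqrt_pos.2 ht0
    have hc0 : 0 < c := Real.sqrt_pos.2 h1t
    have hsq : Real.sqrt (t*(1-t)) = r*c := Real.sqrt_mul h0 _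
    have hc1 : c ≤ 1 := by nlinarith
    have hr1 : r ≤ 1 := by nlinarith
    have hinv : 1 ≤ r⁻¹ := (one_le_inv_iff₀).2 ⟨hr0, hr1⟩
    have h3 := sl1 hinv
    rw [Real.log_inv, inv_inv] at h3
    have hlt : Real.log t = 2*Real.log r := by
      rw [← hr2, Real.log_pow]; push_cast; ring
    have b1 : -(t*Real.log t) ≤ r*(1-t) := by
      have h4 : -Real.log t ≤ r⁻¹ - r := by rw [hlt]; linarith
      have h5 := mul_le_mul_of_nonneg_left h4 h0
      have h6 : t*(r⁻¹-r) = r*(1-t) := by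
        rw [← hr2]; field_simp
      nlinarith [h5]
    have b2 : -((1-t)*Real.log (1-t)) ≤ t := by
      have h4 := Real.log_le_sub_one_of_pos (inv_pos.2 h1t)
      rw [Real.log_inv] at h4
      have h5 := mul_le_mul_of_nonneg_left h4 h1t.le
      have h6 : (1-t)*((1-t)⁻¹-1) = t := by field_simp; ring
      nlinarith [h5]
    have hr' : r ≤ 0.3536 := by nlinarith
    have hc' : (0.935:ℝ) ≤ c := by nlinarith
    have h2L : (0.3862:ℝ) ≤ 2*Real.log 2 - 1 := by nlinarith [log2_gt]
    have key : (0.3536:ℝ) ≤ (2*Real.log 2 - 1)*c := by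
      have := mul_le_mul h2L hc' (by norm_num) (by linarith)
      nlinarith
    have hcc : c^2 ≤ c := by nlinarith
    have step : c^2 + r ≤ 2*Real.log 2*c := by linarith
    have final : r*(c^2 + r) ≤ r*(2*Real.log 2*c) :=
      mul_le_mul_of_nonneg_left step hr0.le
    rw [hsq]
    calc -(t*Real.log t) - (1-t)*Real.log (1-t) ≤ r*(1-t) + t := by linarith
    _ = r*(c^2+r) := by rw [hc2, ← hr2]; ring
    _ ≤ r*(2*Real.log 2*c) := final
    _ = 2*Real.log 2*(r*c) := by ring
  · -- region B
    set l := Real.log 2 with hl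
    set w := Real.sqrt (t*(1-t)) with hwdef
    have hw2 : w^2 = t*(1-t) := Real.sq_sqrt (by nlinarith)
    have hD : (0:ℝ) < 3-2*t := by linarith
    have hinv : (1:ℝ) ≤ (2*t)⁻¹ := (one_le_inv_iff₀).2 ⟨by linarith, by linarith⟩
    have h3 := sl1 hinv
    rw [Real.log_inv, inv_inv, Real.log_mul (by norm_num) ht0.ne'] at h3
    have b1 : -(t*Real.log t) ≤ t*l + 1/4 - t^2 := by
      have h4 : -Real.log t ≤ l + ((2*t)⁻¹ - 2*t)/2 := by rw [hl]; linarith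
      have h5 := mul_le_mul_of_nonneg_left h4 h0
      have h6 : t*(l + ((2*t)⁻¹ - 2*t)/2) = t*l + 1/4 - t^2 := by
        field_simp; ring
      nlinarith [h5]
    have b2 : -((1-t)*Real.log (1-t)) ≤ (1-t)*l - 2*(1-t)*(1-2*t)/(3-2*t) := by
      have h7 := sl2 (show (1:ℝ) ≤ 2*(1-t) by linarith)
      rw [Real.log_mul (by norm_num) h1t.ne',
        show 2*(1-t)-1 = 1-2*t by ring, show 2*(1-t)+1 = 3-2*t by ring] at h7
      have h8 : 2*(1-2*t)/(3-2*t) - l ≤ Real.log (1-t) := by rw [hl]; linarith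
      have h9 := mul_le_mul_of_nonneg_left h8 h1t.le
      have h10 : (1-t)*(2*(1-2*t)/(3-2*t) - l) = 2*(1-t)*(1-2*t)/(3-2*t) - (1-t)*l := by
        field_simp
      nlinarith [h9]
    -- polynomial part
    set P := (3-2*t)*(l + 1/4 - t^2) - 2*(1-t)*(1-2*t) with hPdef
    have hl0 : (0:ℝ) < l := by rw [hl]; exact Real.log_pos (by norm_num)
    have hS0 : (0:ℝ) ≤ 2*l*w*(3-2*t) := by positivity
    have hQ : (2*l*w*(3-2*t))^2 - P^2 = (1-2*t)^2 *
        (-25/16 + (15/2)*l - 9*l^2 + (15/2 - 8*l + 12*l^2)*t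
          + (-23/2 + 2*l - 4*l^2)*t^2 + 6*t^3 - t^4) := by
      rw [hPdef, mul_pow, mul_pow, mul_pow, hw2]; ring
    have hR : (0:ℝ) ≤ -25/16 + (15/2)*l - 9*l^2 + (15/2 - 8*l + 12*l^2)*t
          + (-23/2 + 2*l - 4*l^2)*t^2 + 6*t^3 - t^4 := by
      have hbl : (0.6931471803:ℝ) < l := log2_gt
      have hbu : l < 0.6931471808 := log2_lt
      nlinarith [mul_nonneg (show (0:ℝ) ≤ t - 1/8 by linarith) (show (0:ℝ) ≤ 1/2 - t by linarith),
        sq_nonneg (t - 1/8), sq_nonneg (t - 1/2), sq_nonneg t,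
        mul_nonneg (mul_nonneg (show (0:ℝ) ≤ t - 1/8 by linarith) (show (0:ℝ) ≤ 1/2 - t by linarith)) (show (0:ℝ) ≤ t - 1/8 by linarith),
        mul_nonneg (mul_nonneg (show (0:ℝ) ≤ t - 1/8 by linarith) (show (0:ℝ) ≤ 1/2 - t by linarith)) (show (0:ℝ) ≤ 1/2 - t by linarith),
        sq_nonneg (l - 0.69314718)]
    have hP2 : P^2 ≤ (2*l*w*(3-2*t))^2 := by
      have h13 := mul_nonneg (sq_nonneg (1-2*t)) hR
      rw [← hQ] at h13
      linarith
    have hPS : P ≤ 2*l*w*(3-2*t) := by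
      have h11 : P ≤ Real.sqrt (P^2) := by
        rw [Real.sqrt_sq_eq_abs]; exact le_abs_self P
      have h12 := Real.sqrt_le_sqrt hP2
      rw [Real.sqrt_sq hS0] at h12
      exact le_trans h11 h12
    have hgoal : l + 1/4 - t^2 - 2*(1-t)*(1-2*t)/(3-2*t) ≤ 2*l*w := by
      rw [show l + 1/4 - t^2 - 2*(1-t)*(1-2*t)/(3-2*t) = P/(3-2*t) by
        rw [hPdef, eq_div_iff hD.ne', sub_mul, div_mul_cancel₀ _ hD.ne']; ring]
      rw [div_le_iff₀ hD]
      exact hPS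
    linarith



private lemma binEnt_le {t : ℝ} (h0 : 0 ≤ t) (h1 : t ≤ 1) :
    -(t*Real.log t) - (1-t)*Real.log (1-t) ≤ 2*Real.log 2*Real.sqrt (t*(1-t)) := by
  rcases le_or_gt t (1/2) with h|h
  · exact binEnt_half h0 h
  · have h' := binEnt_half (show (0:ℝ) ≤ 1-t by linarith) (by linarith)
    rw [show (1:ℝ)-(1-t) = t by ring] at h'
    rw [show ((1:ℝ)-t)*t = t*(1-t) by ring] at h'
    linarith

private lemma gibbs {ι : Type*} [DecidableEq ι] (T : Finset ι) (b : ι → ℝ)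
    (hb : ∀ i ∈ T, 0 ≤ b i) (he : 0 < ∑ i ∈ T, b i) :
    ∑ i ∈ T, -(b i * Real.log (b i)) ≤
      -((∑ i ∈ T, b i) * Real.log (∑ i ∈ T, b i))
        + (∑ i ∈ T, b i) * Real.log (T.card) := by
  set e := ∑ i ∈ T, b i with hedef
  have hT : T.Nonempty := by
    rcases T.eq_empty_or_nonempty with h|h
    · subst h; simp at hedef; rw [hedef] at he; norm_num at he
    · exact h
  have hc0 : (0:ℝ) < T.card := by exact_mod_cast Finset.card_pos.2 hT
  have key : ∀ i ∈ T, -(b i * Real.log (b i)) ≤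
      e/T.card - b i - b i * Real.log e + b i * Real.log T.card := by
    intro i hi
    rcases (hb i hi).eq_or_lt with h|h
    · rw [← h]; simp; positivity
    · have hx : (0:ℝ) < e/(T.card * b i) := by positivity
      have h4 := Real.log_le_sub_one_of_pos hx
      rw [Real.log_div he.ne' (by positivity), Real.log_mul (ne_of_gt hc0) h.ne'] at h4
      have h5 := mul_le_mul_of_nonneg_left h4 (hb i hi)
      have h6 : b i * (e/(T.card * b i) - 1) = e/T.card - b i := by field_simp
      nlinarith [h5]
  have hsum := Finset.sum_le_sum key
  have hconst : ∑ _i ∈ T, e/(T.card:ℝ) = e := by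
    rw [Finset.sum_const, nsmul_eq_mul]
    field_simp
  calc ∑ i ∈ T, -(b i * Real.log (b i))
      ≤ ∑ i ∈ T, (e/T.card - b i - b i * Real.log e + b i * Real.log T.card) := hsum
    _ = (∑ _i ∈ T, e/(T.card:ℝ)) - (∑ i ∈ T, b i)
        - (∑ i ∈ T, b i) * Real.log e + (∑ i ∈ T, b i) * Real.log T.card := by
        rw [Finset.sum_add_distrib, Finset.sum_sub_distrib, Finset.sum_sub_distrib,
          ← Finset.sum_mul, ← Finset.sum_mul]
    _ = -(e*Real.log e) + e * Real.log T.card := by rw [hconst, ← hedef]; ring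



private lemma pointwise_lower {k : ℕ} (hne : (Finset.univ : Finset (Fin k)).Nonempty) (a : Fin k → ℝ) (ha : ∀ i, 0 ≤ a i) :
    2 * Real.log 2 * ((∑ i, a i) - Finset.univ.sup' hne a) ≤
      (∑ i, a i) * Real.log (∑ i, a i) - ∑ i, a i * Real.log (a i) := by
  obtain ⟨i₀, -, hi₀⟩ := Finset.exists_mem_eq_sup' hne a
  set s := ∑ i, a i with hs
  set m := Finset.univ.sup' hne a with hm
  have hm_le : ∀ i, a i ≤ m := fun i => Finset.le_sup' a (Finset.mem_univ i)
  have hai₀ : a i₀ = m := hi₀.symm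
  have hm0 : 0 ≤ m := hai₀ ▸ ha i₀
  have hesum : a i₀ + ∑ i ∈ Finset.univ.erase i₀, a i = s :=
    Finset.add_sum_erase _ a (Finset.mem_univ i₀)
  have hme : s - m = ∑ i ∈ Finset.univ.erase i₀, a i := by
    rw [← hai₀]; linarith
  have he0 : 0 ≤ s - m := by
    rw [hme]; exact Finset.sum_nonneg (fun i _ => ha i)
  have hs0 : 0 ≤ s := Finset.sum_nonneg (fun i _ => ha i)
  by_cases hszero : s = 0
  · have hall : ∀ i ∈ Finset.univ, a i = 0 :=
      (Finset.sum_eq_zero_iff_of_nonneg (fun i _ => ha i)).1 (by rw [← hs]; exact hszero)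
    have hmz : m = 0 := by rw [← hai₀]; exact hall i₀ (Finset.mem_univ _)
    rw [hszero, hmz, Finset.sum_eq_zero (fun i hi => by rw [hall i hi]; ring)]
    simp
  have hs0' : 0 < s := lt_of_le_of_ne hs0 (Ne.symm hszero)
  have hRHS : s * Real.log s - ∑ i, a i * Real.log (a i)
      = ∑ i, a i * (Real.log s - Real.log (a i)) := by
    simp only [mul_sub]
    rw [Finset.sum_sub_distrib, ← Finset.sum_mul, ← hs]
  have hmpos : 0 < m := by
    by_contra hcon
    push_neg at hcon
    have h1 : s ≤ 0 := by
      rw [hs]; exact Finset.sum_nonpos (fun i _ => le_trans (hm_le i) hcon)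
    linarith
  rw [hRHS]
  rcases le_or_gt (2*m) s with hcase|hcase
  · have step : ∀ i ∈ Finset.univ, a i * (Real.log s - Real.log m)
        ≤ a i * (Real.log s - Real.log (a i)) := by
      intro i _
      rcases (ha i).eq_or_lt with h|h
      · rw [← h]; simp
      · exact mul_le_mul_of_nonneg_left
          (sub_le_sub_left (Real.log_le_log h (hm_le i)) _) (ha i)
    have hsum := Finset.sum_le_sum step
    rw [← Finset.sum_mul, ← hs] at hsum
    have hlog := l3 (t := m/s) (div_pos hmpos hs0') (by rw [div_le_iff₀ hs0']; linarith)
    rw [Real.log_div (ne_of_gt hmpos) (ne_of_gt hs0')] at hlog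
    have h7 := mul_le_mul_of_nonneg_left hlog hs0
    have hid : s*(2*Real.log 2*(1 - m/s)) = 2*Real.log 2*(s-m) := by field_simp; try ring
    nlinarith [hsum, h7]
  · have hsplit : ∑ i, a i * (Real.log s - Real.log (a i))
        = a i₀ * (Real.log s - Real.log (a i₀))
          + ∑ i ∈ Finset.univ.erase i₀, a i * (Real.log s - Real.log (a i)) :=
      (Finset.add_sum_erase _ _ (Finset.mem_univ i₀)).symm
    by_cases hez : s - m = 0
    · have hall0 : ∀ i ∈ Finset.univ.erase i₀, a i = 0 :=
        (Finset.sum_eq_zero_iff_of_nonneg (fun i _ => ha i)).1 (hme.symm.trans hez)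
      rw [hsplit, hez]
      have : ∀ i ∈ Finset.univ.erase i₀, a i * (Real.log s - Real.log (a i)) = 0 := by
        intro i hi; rw [hall0 i hi]; ring
      rw [Finset.sum_eq_zero this, hai₀]
      have hms : m = s := by linarith
      rw [hms]
      simp
    · have hepos : 0 < s - m := lt_of_le_of_ne he0 (Ne.symm hez)
      have hestep : ∀ i ∈ Finset.univ.erase i₀,
          a i * (Real.log s - Real.log (s-m)) ≤ a i * (Real.log s - Real.log (a i)) := by
        intro i hi
        rcases (ha i).eq_or_lt with h|h
        · rw [← h]; simp
        · have hile : a i ≤ s - m := by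
            rw [hme]; exact Finset.single_le_sum (f := a) (fun j _ => ha j) hi
          exact mul_le_mul_of_nonneg_left
            (sub_le_sub_left (Real.log_le_log h hile) _) (ha i)
      have hsum2 := Finset.sum_le_sum hestep
      rw [← Finset.sum_mul, ← hme] at hsum2
      have hl2 := l2 (t := (s-m)/s) (div_nonneg he0 hs0) (by rw [div_le_iff₀ hs0']; linarith)
      have h1mt : 1 - (s-m)/s = m/s := by field_simp; ring
      rw [h1mt, Real.log_div (ne_of_gt hepos) (ne_of_gt hs0'),
        Real.log_div (ne_of_gt hmpos) (ne_of_gt hs0')] at hl2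
      have h7 := mul_le_mul_of_nonneg_left hl2 hs0
      have hid1 : s*(2*Real.log 2*((s-m)/s)) = 2*Real.log 2*(s-m) := by field_simp; try ring
      have hid2 : s*(-(((s-m)/s)*(Real.log (s-m) - Real.log s))
            - (m/s)*(Real.log m - Real.log s))
          = (s-m)*(Real.log s - Real.log (s-m)) + m*(Real.log s - Real.log m) := by
        field_simp; try ring
      rw [hsplit, hai₀]
      nlinarith [hsum2, h7]

private lemma pointwise_upper {k : ℕ} (hne : (Finset.univ : Finset (Fin k)).Nonempty) (a : Fin k → ℝ) (ha : ∀ i, 0 ≤ a i) :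
    (∑ i, a i) * Real.log (∑ i, a i) - ∑ i, a i * Real.log (a i) ≤
      2 * Real.log 2 *
          Real.sqrt (((∑ i, a i) - Finset.univ.sup' hne a) * Finset.univ.sup' hne a)
        + ((∑ i, a i) - Finset.univ.sup' hne a) * Real.log ((k:ℝ) - 1) := by
  obtain ⟨i₀, -, hi₀⟩ := Finset.exists_mem_eq_sup' hne a
  set s := ∑ i, a i with hs
  set m := Finset.univ.sup' hne a with hm
  have hm_le : ∀ i, a i ≤ m := fun i => Finset.le_sup' a (Finset.mem_univ i)
  have hai₀ : a i₀ = m := hi₀.symm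
  have hm0 : 0 ≤ m := hai₀ ▸ ha i₀
  have hesum : a i₀ + ∑ i ∈ Finset.univ.erase i₀, a i = s :=
    Finset.add_sum_erase _ a (Finset.mem_univ i₀)
  have hme : s - m = ∑ i ∈ Finset.univ.erase i₀, a i := by
    rw [← hai₀]; linarith
  have he0 : 0 ≤ s - m := by
    rw [hme]; exact Finset.sum_nonneg (fun i _ => ha i)
  have hs0 : 0 ≤ s := Finset.sum_nonneg (fun i _ => ha i)
  by_cases hszero : s = 0
  · have hall : ∀ i ∈ Finset.univ, a i = 0 :=
      (Finset.sum_eq_zero_iff_of_nonneg (fun i _ => ha i)).1 (by rw [← hs]; exact hszero)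
    have hmz : m = 0 := by rw [← hai₀]; exact hall i₀ (Finset.mem_univ _)
    rw [hszero, hmz, Finset.sum_eq_zero (fun i hi => by rw [hall i hi]; ring)]
    simp
  have hs0' : 0 < s := lt_of_le_of_ne hs0 (Ne.symm hszero)
  have hRHS : s * Real.log s - ∑ i, a i * Real.log (a i)
      = ∑ i, a i * (Real.log s - Real.log (a i)) := by
    simp only [mul_sub]
    rw [Finset.sum_sub_distrib, ← Finset.sum_mul, ← hs]
  have hmpos : 0 < m := by
    by_contra hcon
    push_neg at hcon
    have h1 : s ≤ 0 := by
      rw [hs]; exact Finset.sum_nonpos (fun i _ => le_trans (hm_le i) hcon)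
    linarith
  have hsplit : ∑ i, a i * (Real.log s - Real.log (a i))
      = a i₀ * (Real.log s - Real.log (a i₀))
        + ∑ i ∈ Finset.univ.erase i₀, a i * (Real.log s - Real.log (a i)) :=
    (Finset.add_sum_erase _ _ (Finset.mem_univ i₀)).symm
  rw [hRHS]
  by_cases hez : s - m = 0
  · have hall0 : ∀ i ∈ Finset.univ.erase i₀, a i = 0 :=
      (Finset.sum_eq_zero_iff_of_nonneg (fun i _ => ha i)).1 (hme.symm.trans hez)
    rw [hsplit, hai₀, hez]
    rw [Finset.sum_eq_zero (fun i hi => by rw [hall0 i hi]; ring)]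
    have hms : m = s := by linarith
    rw [hms]
    simp
  · have hepos : 0 < s - m := lt_of_le_of_ne he0 (Ne.symm hez)
    have hTcard : (((Finset.univ : Finset (Fin k)).erase i₀).card : ℝ) = (k:ℝ) - 1 := by
      rw [Finset.card_erase_of_mem (Finset.mem_univ _), Finset.card_univ, Fintype.card_fin]
      have hk1 : 1 ≤ k := Fin.pos i₀
      push_cast [Nat.cast_sub hk1]
      ring
    have hgibbs := gibbs (Finset.univ.erase i₀) a (fun i _ => ha i)
      (by rw [← hme]; exact hepos)
    rw [← hme, hTcard] at hgibbs
    have hTsum : ∑ i ∈ Finset.univ.erase i₀, a i * (Real.log s - Real.log (a i))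
        = (s-m)*Real.log s + ∑ i ∈ Finset.univ.erase i₀, -(a i * Real.log (a i)) := by
      simp only [mul_sub]
      rw [Finset.sum_sub_distrib, ← Finset.sum_mul, ← hme, Finset.sum_neg_distrib]
      ring
    have hbin := binEnt_le (t := (s-m)/s) (div_nonneg he0 hs0)
      (by rw [div_le_one hs0']; linarith)
    have h1mt : 1 - (s-m)/s = m/s := by field_simp; ring
    rw [h1mt, Real.log_div (ne_of_gt hepos) (ne_of_gt hs0'),
      Real.log_div (ne_of_gt hmpos) (ne_of_gt hs0')] at hbin
    have h7 := mul_le_mul_of_nonneg_left hbin hs0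
    have hid2 : s*(-(((s-m)/s)*(Real.log (s-m) - Real.log s))
          - (m/s)*(Real.log m - Real.log s))
        = (s-m)*(Real.log s - Real.log (s-m)) + m*(Real.log s - Real.log m) := by
      field_simp; try ring
    have hsqrt : s * Real.sqrt ((s-m)/s*(m/s)) = Real.sqrt ((s-m)*m) := by
      calc s * Real.sqrt ((s-m)/s*(m/s))
          = Real.sqrt (s^2) * Real.sqrt ((s-m)/s*(m/s)) := by rw [Real.sqrt_sq hs0]
        _ = Real.sqrt (s^2 * ((s-m)/s*(m/s))) := (Real.sqrt_mul (sq_nonneg s) _).symm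
        _ = Real.sqrt ((s-m)*m) := by
            rw [show s^2 * ((s-m)/s*(m/s)) = (s-m)*m by field_simp; try ring]
    have h8 : s*(2*Real.log 2*Real.sqrt ((s-m)/s*(m/s)))
        = 2*Real.log 2*Real.sqrt ((s-m)*m) := by
      rw [← hsqrt]; ring
    rw [hsplit, hai₀, hTsum]
    nlinarith [hgibbs, h7, hid2, h8]





private lemma loglem {u : ℝ} (hu : 1 ≤ u) :
    (Real.log u)^2 ≤ 4*(Real.log 2)^2*(u-1) := by
  have hL2 : (0.48:ℝ) ≤ (Real.log 2)^2 := by nlinarith [log2_gt]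
  rcases le_or_gt u 8 with h8|h8
  · have hr0 := Real.sqrt_nonneg u
    have hr2 : Real.sqrt u^2 = u := Real.sq_sqrt (by linarith)
    have hr1 : 1 ≤ Real.sqrt u := by nlinarith
    have hlog : Real.log u = 2*Real.log (Real.sqrt u) := by
      rw [Real.log_sqrt (by linarith)]; ring
    have hlr : Real.log (Real.sqrt u) ≤ Real.sqrt u - 1 :=
      Real.log_le_sub_one_of_pos (by linarith)
    have hl0 : 0 ≤ Real.log (Real.sqrt u) := Real.log_nonneg hr1
    have hru : Real.sqrt u ≤ 2.8285 := by nlinarith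
    have h1 : (Real.log u)^2 ≤ 4*(Real.sqrt u - 1)^2 := by rw [hlog]; nlinarith
    have h2 : 4*(Real.sqrt u - 1)^2 ≤ 4*(Real.log 2)^2*(u-1) := by
      nlinarith [sq_nonneg (Real.sqrt u - 1)]
    linarith
  · set r := Real.sqrt u with hrdef
    set q := Real.sqrt r with hqdef
    have hr0 := Real.sqrt_nonneg u
    have hq0 := Real.sqrt_nonneg r
    have hr2 : r^2 = u := Real.sq_sqrt (by linarith)
    have hq2 : q^2 = r := Real.sq_sqrt hr0
    have hq4 : q^4 = u := by nlinarith
    have hrge : (2.8284:ℝ) ≤ r := by nlinarith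
    have hqge : (1.68:ℝ) ≤ q := by nlinarith
    have hq1 : (1:ℝ) ≤ q := by linarith
    have hlogq : Real.log u = 4*Real.log q := by
      have e1 : Real.log r = Real.log u / 2 := Real.log_sqrt (by linarith)
      have e2 : Real.log q = Real.log r / 2 := Real.log_sqrt hr0
      linarith
    have hlq : Real.log q ≤ q - 1 := Real.log_le_sub_one_of_pos (by linarith)
    have hlq0 : 0 ≤ Real.log q := Real.log_nonneg hq1
    have h1 : (Real.log u)^2 ≤ 16*(q-1)^2 := by rw [hlogq]; nlinarith
    have h3 : 4*(q-1) ≤ (Real.log 2)^2*((q+1)*(q^2+1)) := by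
      nlinarith [sq_nonneg (q-1.68), mul_nonneg (sub_nonneg.2 hqge) (sub_nonneg.2 hqge)]
    have h4 := mul_le_mul_of_nonneg_left h3 (show (0:ℝ) ≤ 4*(q-1) by linarith)
    have h5 : 16*(q-1)^2 ≤ 4*(Real.log 2)^2*(u-1) := by nlinarith [h4]
    linarith

private lemma main_general {X : Type*} [Fintype X] (k : ℕ) (hk : 0 < k)
    (p : Fin k → X → ℝ) (π : Fin k → ℝ)
    (hp : ∀ i x, 0 ≤ p i x) (hps : ∀ i, ∑ x, p i x = 1)
    (hπ : ∀ i, 0 ≤ π i) (hπs : ∑ i, π i = 1)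
    (hne : (Finset.univ : Finset (Fin k)).Nonempty) :
    (1 / (4 * ((k : ℝ) - 1))) *
        ((-∑ i, π i * Real.logb 2 (π i)) -
          (entropy2 (fun x => ∑ i, π i * p i x) - ∑ i, π i * entropy2 (p i))) ^ 2
      ≤ ∑ x, ((∑ i, π i * p i x) -
          Finset.univ.sup' hne (fun i => π i * p i x)) ∧
    ∑ x, ((∑ i, π i * p i x) -
          Finset.univ.sup' hne (fun i => π i * p i x))
      ≤ (1 / 2) *
        ((-∑ i, π i * Real.logb 2 (π i)) -
          (entropy2 (fun x => ∑ i, π i * p i x) - ∑ i, π i * entropy2 (p i))) := by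
  obtain ⟨j₀, -⟩ := id hne
  set G := (-∑ i, π i * Real.logb 2 (π i)) -
      (entropy2 (fun x => ∑ i, π i * p i x) - ∑ i, π i * entropy2 (p i)) with hGdef
  set Pe := ∑ x, ((∑ i, π i * p i x) - Finset.univ.sup' hne (fun i => π i * p i x))
    with hPedef
  have hax : ∀ (x : X) (i : Fin k), 0 ≤ π i * p i x :=
    fun x i => mul_nonneg (hπ i) (hp i x)
  have hs1 : ∑ x, (∑ i, π i * p i x) = 1 := by
    rw [Finset.sum_comm]
    calc ∑ i, ∑ x, π i * p i x = ∑ i, π i * ∑ x, p i x := by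
          refine Finset.sum_congr rfl (fun i _ => ?_); rw [Finset.mul_sum]
      _ = ∑ i, π i := by
          refine Finset.sum_congr rfl (fun i _ => ?_); rw [hps i, mul_one]
      _ = 1 := hπs
  have hm_le_s : ∀ x, Finset.univ.sup' hne (fun i => π i * p i x) ≤ ∑ i, π i * p i x :=
    fun x => Finset.sup'_le hne _
      (fun i _ => Finset.single_le_sum (fun j _ => hax x j) (Finset.mem_univ i))
  have hm_nonneg : ∀ x, 0 ≤ Finset.univ.sup' hne (fun i => π i * p i x) := by
    intro x
    exact le_trans (hax x j₀) (Finset.le_sup' (f := fun i => π i * p i x) (Finset.mem_univ j₀))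
  have hPe0 : 0 ≤ Pe :=
    Finset.sum_nonneg (fun x _ => sub_nonneg.2 (hm_le_s x))
  have hMsum : ∑ x, Finset.univ.sup' hne (fun i => π i * p i x) = 1 - Pe := by
    have : Pe = 1 - ∑ x, Finset.univ.sup' hne (fun i => π i * p i x) := by
      rw [hPedef, Finset.sum_sub_distrib, hs1]
    linarith
  have hPe1 : Pe ≤ 1 := by
    have := Finset.sum_nonneg (fun x (_ : x ∈ Finset.univ) => hm_nonneg x)
    rw [hMsum] at this; linarith
  set Jn := ∑ x, ((∑ i, π i * p i x) * Real.log (∑ i, π i * p i x)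
      - ∑ i, (π i * p i x) * Real.log (π i * p i x)) with hJndef
  -- lower pointwise bound, summed
  have hlow : 2 * Real.log 2 * Pe ≤ Jn := by
    rw [hPedef, hJndef, Finset.mul_sum]
    exact Finset.sum_le_sum (fun x _ => pointwise_lower hne (fun i => π i * p i x) (hax x))
  -- identity : log 2 * G = Jn
  have hlb : ∀ y : ℝ, Real.log 2 * Real.logb 2 y = Real.log y := by
    intro y
    rw [Real.logb, mul_comm]
    exact div_mul_cancel₀ _ (ne_of_gt log2_pos)
  have eEnt : ∀ f : X → ℝ, Real.log 2 * entropy2 f = -∑ x, f x * Real.log (f x) := by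
    intro f
    rw [entropy2, mul_neg, Finset.mul_sum]
    congr 1
    refine Finset.sum_congr rfl (fun x _ => ?_)
    rw [← mul_assoc, mul_comm (Real.log 2) (f x), mul_assoc, hlb]
  have eH : Real.log 2 * (-∑ i, π i * Real.logb 2 (π i)) = -∑ i, π i * Real.log (π i) := by
    rw [mul_neg, Finset.mul_sum]
    congr 1
    refine Finset.sum_congr rfl (fun i _ => ?_)
    rw [← mul_assoc, mul_comm (Real.log 2) (π i), mul_assoc, hlb]
  have eS : Real.log 2 * (∑ i, π i * entropy2 (p i))
      = ∑ i, π i * (-∑ x, p i x * Real.log (p i x)) := by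
    rw [Finset.mul_sum]
    refine Finset.sum_congr rfl (fun i _ => ?_)
    rw [← mul_assoc, mul_comm (Real.log 2) (π i), mul_assoc, eEnt]
  have ecomb : ∑ x, ∑ i, (π i * p i x) * Real.log (π i * p i x)
      = (∑ i, π i * Real.log (π i)) + ∑ i, π i * (∑ x, p i x * Real.log (p i x)) := by
    rw [Finset.sum_comm, ← Finset.sum_add_distrib]
    refine Finset.sum_congr rfl (fun i _ => ?_)
    have hterm : ∀ x : X, (π i * p i x) * Real.log (π i * p i x)
        = p i x * (π i * Real.log (π i)) + π i * (p i x * Real.log (p i x)) := by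
      intro x
      rcases (hπ i).eq_or_lt with h|h
      · simp [← h]
      rcases (hp i x).eq_or_lt with h2|h2
      · simp [← h2]
      rw [Real.log_mul h.ne' h2.ne']; ring
    rw [Finset.sum_congr rfl (fun x _ => hterm x), Finset.sum_add_distrib,
      ← Finset.sum_mul, hps i, ← Finset.mul_sum]
    ring
  have eP : Real.log 2 * entropy2 (fun x => ∑ i, π i * p i x)
      = -∑ x, (∑ i, π i * p i x) * Real.log (∑ i, π i * p i x) := eEnt _
  have eSneg : ∑ i, π i * (-∑ x, p i x * Real.log (p i x))
      = -∑ i, π i * (∑ x, p i x * Real.log (p i x)) := by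
    rw [← Finset.sum_neg_distrib]
    exact Finset.sum_congr rfl (fun i _ => by ring)
  have hJnsplit : Jn = (∑ x, (∑ i, π i * p i x) * Real.log (∑ i, π i * p i x))
      - ∑ x, ∑ i, (π i * p i x) * Real.log (π i * p i x) := by
    rw [hJndef, Finset.sum_sub_distrib]
  have hG : Real.log 2 * G = Jn := by
    rw [hGdef, mul_sub, mul_sub, eH, eP, eS, hJnsplit, ecomb, eSneg]
    ring
  -- upper bound conjunct
  have hup2 : Pe ≤ (1/2) * G := by
    have h1 : Real.log 2 * (2*Pe) ≤ Real.log 2 * G := by rw [hG]; linarith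
    have h2 := le_of_mul_le_mul_left h1 log2_pos
    linarith
  have hG0 : 0 ≤ G := by linarith
  refine ⟨?_, hup2⟩
  rcases Nat.lt_or_ge k 2 with hk2|hk2
  · -- k = 1 : coefficient is 1/0 = 0
    have hk1 : k = 1 := by omega
    subst hk1
    norm_num
    exact hPe0
  · have hu1 : (1:ℝ) ≤ (k:ℝ) - 1 := by
      have h2k : (2:ℝ) ≤ (k:ℝ) := by exact_mod_cast hk2
      linarith
    have hupJ : Jn ≤ ∑ x, (2*Real.log 2*Real.sqrt
          ((((∑ i, π i * p i x) - Finset.univ.sup' hne (fun i => π i * p i x)))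
            * Finset.univ.sup' hne (fun i => π i * p i x))
        + ((∑ i, π i * p i x) - Finset.univ.sup' hne (fun i => π i * p i x))
            * Real.log ((k:ℝ)-1)) := by
      rw [hJndef]
      exact Finset.sum_le_sum (fun x _ => pointwise_upper hne (fun i => π i * p i x) (hax x))
    set W := ∑ x, Real.sqrt ((((∑ i, π i * p i x)
        - Finset.univ.sup' hne (fun i => π i * p i x)))
        * Finset.univ.sup' hne (fun i => π i * p i x)) with hWdef
    have hsplit2 : ∑ x, (2*Real.log 2*Real.sqrt
          ((((∑ i, π i * p i x) - Finset.univ.sup' hne (fun i => π i * p i x)))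
            * Finset.univ.sup' hne (fun i => π i * p i x))
        + ((∑ i, π i * p i x) - Finset.univ.sup' hne (fun i => π i * p i x))
            * Real.log ((k:ℝ)-1))
        = 2*Real.log 2*W + Pe*Real.log ((k:ℝ)-1) := by
      rw [Finset.sum_add_distrib, ← Finset.mul_sum, ← Finset.sum_mul, ← hWdef, ← hPedef]
    have hupJ2 : Jn ≤ 2*Real.log 2*W + Pe*Real.log ((k:ℝ)-1) := by
      rw [← hsplit2]; exact hupJ
    have hW0 : 0 ≤ W := Finset.sum_nonneg (fun x _ => Real.sqrt_nonneg _)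
    have hWsq : W^2 ≤ Pe * (1-Pe) := by
      have hcs := Finset.sum_sq_le_sum_mul_sum_of_sq_eq_mul Finset.univ
        (r := fun x => Real.sqrt ((((∑ i, π i * p i x)
          - Finset.univ.sup' hne (fun i => π i * p i x)))
          * Finset.univ.sup' hne (fun i => π i * p i x)))
        (f := fun x => (∑ i, π i * p i x) - Finset.univ.sup' hne (fun i => π i * p i x))
        (g := fun x => Finset.univ.sup' hne (fun i => π i * p i x))
        (fun x _ => sub_nonneg.2 (hm_le_s x)) (fun x _ => hm_nonneg x)
        (fun x _ => Real.sq_sqrt (mul_nonneg (sub_nonneg.2 (hm_le_s x)) (hm_nonneg x)))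
      rw [← hWdef, ← hPedef, hMsum] at hcs
      exact hcs
    have hWle : W ≤ Real.sqrt Pe * Real.sqrt (1-Pe) := by
      have h1 : W ≤ Real.sqrt (Pe*(1-Pe)) := by
        rw [← Real.sqrt_sq hW0]
        exact Real.sqrt_le_sqrt hWsq
      rwa [Real.sqrt_mul hPe0] at h1
    set A := Real.sqrt (1-Pe) with hAdef
    set B := Real.sqrt Pe with hBdef
    have hA0 : 0 ≤ A := Real.sqrt_nonneg _
    have hB0 : 0 ≤ B := Real.sqrt_nonneg _
    have hA2 : A^2 = 1-Pe := Real.sq_sqrt (by linarith)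
    have hB2 : B^2 = Pe := Real.sq_sqrt hPe0
    have hLam0 : 0 ≤ Real.log ((k:ℝ)-1) := Real.log_nonneg hu1
    have hGle : Real.log 2 * G ≤ Real.log 2*(2*(B*A)) + Pe * Real.log ((k:ℝ)-1) := by
      rw [hG]
      have h3 := mul_le_mul_of_nonneg_left hWle
        (by positivity : (0:ℝ) ≤ 2*Real.log 2)
      calc Jn ≤ 2*Real.log 2*W + Pe*Real.log ((k:ℝ)-1) := hupJ2
        _ ≤ 2*Real.log 2*(B*A) + Pe*Real.log ((k:ℝ)-1) := by nlinarith [h3]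
        _ = Real.log 2*(2*(B*A)) + Pe*Real.log ((k:ℝ)-1) := by ring
    have hloglem := loglem hu1
    have c1 : (2*Real.log 2*A + B*Real.log ((k:ℝ)-1))^2
        ≤ 4*(Real.log 2)^2 + (Real.log ((k:ℝ)-1))^2 := by
      nlinarith [sq_nonneg (Real.log ((k:ℝ)-1)*A - 2*Real.log 2*B), hA2, hB2]
    have c2 : 4*(Real.log 2)^2 + (Real.log ((k:ℝ)-1))^2
        ≤ 4*(Real.log 2)^2*((k:ℝ)-1) := by nlinarith [hloglem]
    have c3 : (Real.log 2*G)^2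
        ≤ (Real.log 2*(2*(B*A)) + Pe*Real.log ((k:ℝ)-1))^2 :=
      pow_le_pow_left₀ (mul_nonneg log2_pos.le hG0) hGle 2
    have c4 : (Real.log 2*(2*(B*A)) + Pe*Real.log ((k:ℝ)-1))^2
        = B^2*((2*Real.log 2*A + B*Real.log ((k:ℝ)-1))^2) := by
      rw [← hB2]; ring
    have c5 : B^2*((2*Real.log 2*A + B*Real.log ((k:ℝ)-1))^2)
        ≤ B^2*(4*(Real.log 2)^2*((k:ℝ)-1)) :=
      mul_le_mul_of_nonneg_left (le_trans c1 c2) (sq_nonneg B)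
    have c6 : (Real.log 2)^2*(G^2) ≤ (Real.log 2)^2*(4*((k:ℝ)-1)*Pe) := by
      have e1 : (Real.log 2*G)^2 = (Real.log 2)^2*(G^2) := by ring
      have e2 : B^2*(4*(Real.log 2)^2*((k:ℝ)-1)) = (Real.log 2)^2*(4*((k:ℝ)-1)*Pe) := by
        rw [hB2]; ring
      rw [← e1, ← e2]
      exact le_trans c3 (le_trans (le_of_eq c4) c5)
    have hfin : G^2 ≤ 4*((k:ℝ)-1)*Pe :=
      le_of_mul_le_mul_left c6 (by positivity)
    have hu0 : (0:ℝ) < 4*((k:ℝ)-1) := by linarith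
    have h7 : (1/(4*((k:ℝ)-1)))*G^2 ≤ (1/(4*((k:ℝ)-1)))*(4*((k:ℝ)-1)*Pe) :=
      mul_le_mul_of_nonneg_left hfin (by positivity)
    have h8 : (1/(4*((k:ℝ)-1)))*(4*((k:ℝ)-1)*Pe) = Pe := by
      field_simp
    linarith

theorem lin_multiclass_bounds {X : Type*} [Fintype X] (k : ℕ) (hk : 0 < k)
    (p : Fin k → X → ℝ) (π : Fin k → ℝ)
    (hp : ∀ i x, 0 ≤ p i x) (hps : ∀ i, ∑ x, p i x = 1)
    (hπ : ∀ i, 0 ≤ π i) (hπs : ∑ i, π i = 1) :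
    (1 / (4 * ((k : ℝ) - 1))) *
        ((-∑ i, π i * Real.logb 2 (π i)) -
          (entropy2 (fun x => ∑ i, π i * p i x) - ∑ i, π i * entropy2 (p i))) ^ 2
      ≤ ∑ x, ((∑ i, π i * p i x) -
          Finset.univ.sup' ⟨⟨0, hk⟩, Finset.mem_univ _⟩ (fun i => π i * p i x)) ∧
    ∑ x, ((∑ i, π i * p i x) -
          Finset.univ.sup' ⟨⟨0, hk⟩, Finset.mem_univ _⟩ (fun i => π i * p i x))
      ≤ (1 / 2) *
        ((-∑ i, π i * Real.logb 2 (π i)) -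
          (entropy2 (fun x => ∑ i, π i * p i x) - ∑ i, π i * entropy2 (p i))) :=
  main_general k hk p π hp hps hπ hπs ⟨⟨0, hk⟩, Finset.mem_univ _⟩
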